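/- Let K be a number field with ring of integers O, R ⊆ O a subring generated by a set S of elements, P a prime ideal of O of residue characteristic p, and σ an automorphism of K/Q with σ(s) ≡ s (mod P) for all s ∈ S. If p does not divide [O : R] (where R has finite index in O), then σ(P) ⊆ P and σ acts trivially on O/P, i.e., σ(y) ≡ y (mod P) for all y ∈ O. -/
import Mathlib


open NumberField

/-- Let `K` be a number field with ring of integers `O`, `R ⊆ O` a subring of finite
index generated (as a ring) by a set `S`, `P` a prime of `O` of residue characteristic
`p`, and `σ` an automorphism of `K/ℚ` (viewed on `O`) with `σ(s) ≡ s (mod P)` for all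
`s ∈ S`.  If `p` does not divide `[O : R]`, then `σ(P) ⊆ P` and `σ` acts trivially on
`O/P`, i.e. `σ(y) ≡ y (mod P)` for all `y ∈ O`. -/
theorem stmt_12 (K : Type) [Field K] [NumberField K]
    (R : Subring (𝓞 K)) (S : Set (𝓞 K)) (hS : Subring.closure S = R)
    [Finite (𝓞 K ⧸ R.toAddSubgroup)]
    (P : Ideal (𝓞 K)) (hP : P.IsPrime) (p : ℕ) (hp : p.Prime) (hpP : (p : 𝓞 K) ∈ P)
    (hnd : ¬ p ∣ Nat.card (𝓞 K ⧸ R.toAddSubgroup))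
    (σ : 𝓞 K ≃ₐ[ℤ] 𝓞 K) (hσ : ∀ s ∈ S, σ s - s ∈ P) :
    (∀ x ∈ P, σ x ∈ P) ∧ ∀ y : 𝓞 K, σ y - y ∈ P := by
  set m := Nat.card (𝓞 K ⧸ R.toAddSubgroup) with hm
  -- m • y ∈ R for every y
  have hmem : ∀ y : 𝓞 K, (m : 𝓞 K) * y ∈ R := by
    intro y
    have h0 : (m • (y : 𝓞 K ⧸ R.toAddSubgroup) : 𝓞 K ⧸ R.toAddSubgroup) = 0 :=
      card_nsmul_eq_zero'
    have : ((m • y : 𝓞 K) : 𝓞 K ⧸ R.toAddSubgroup) = 0 := by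
      simpa using h0
    have := (QuotientAddGroup.eq_zero_iff (m • y)).mp this
    simpa [nsmul_eq_mul] using this
  -- σ x ≡ x mod P for x ∈ R
  have hR : ∀ x ∈ R, σ x - x ∈ P := by
    have heq : Set.EqOn ((Ideal.Quotient.mk P).comp (σ : 𝓞 K →+* 𝓞 K))
        (Ideal.Quotient.mk P) S := by
      intro s hs
      simp only [RingHom.comp_apply]
      rw [Ideal.Quotient.mk_eq_mk_iff_sub_mem]
      exact hσ s hs
    have := RingHom.eqOn_set_closure heq
    intro x hx
    rw [← hS] at hx
    have hx' := this hx
    simp only [RingHom.comp_apply] at hx'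
    exact (Ideal.Quotient.mk_eq_mk_iff_sub_mem _ _).mp hx'
  -- m ∉ P
  have hmP : (m : 𝓞 K) ∉ P := by
    intro hmem'
    have hc : IsCoprime (p : ℤ) (m : ℤ) := by
      rw [Int.isCoprime_iff_gcd_eq_one]
      exact Nat.Coprime.gcd_eq_one (by simpa using (hp.coprime_iff_not_dvd.mpr hnd))
    obtain ⟨a, b, hab⟩ := hc
    have : (1 : 𝓞 K) ∈ P := by
      have := congrArg (algebraMap ℤ (𝓞 K)) hab
      push_cast at this
      rw [← this]
      exact P.add_mem (P.mul_mem_left _ hpP) (P.mul_mem_left _ hmem')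
    exact hP.ne_top (P.eq_top_iff_one.mpr this)
  -- main congruence
  have hmain : ∀ y : 𝓞 K, σ y - y ∈ P := by
    intro y
    have h1 : σ ((m : 𝓞 K) * y) - (m : 𝓞 K) * y ∈ P := hR _ (hmem y)
    have h2 : (m : 𝓞 K) * (σ y - y) ∈ P := by
      have : σ ((m : 𝓞 K) * y) = (m : 𝓞 K) * σ y := by
        simp [map_mul, map_natCast]
      rw [this] at h1
      simpa [mul_sub] using h1
    rcases hP.mem_or_mem h2 with h | h
    · exact absurd h hmP
    · exact h
  refine ⟨fun x hx => ?_, hmain⟩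
  have : σ x = (σ x - x) + x := by ring
  rw [this]
  exact P.add_mem (hmain x) hx
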